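/- In the Pareto elimination rule, if the true metrics of all operators lie in their confidence intervals, then any operator whose quality-UCB and cost-LCB rectangle has empty overlap with every frontier operator's (quality-LCB, cost-UCB) region in the dominance sense is truly not Pareto-optimal; hence eliminating it never removes a truly Pareto-optimal operator. -/
import Mathlib


/-- Pareto elimination is safe. Operators are drawn from a finite set `F`, with true
quality `q` and cost `c`, and confidence intervals `[lq, uq]` and `[lc, uc]` containing
the truth. If operator `i` fails the overlap test against some operator `j ∈ F`
(i.e. `uq i < lq j` and `uc j < lc i`), then `i` is strictly dominated in truth by `j`
and hence is not on the true Pareto frontier (maximize quality, minimize cost). -/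
theorem eliminated_operator_not_pareto_optimal
    {ι : Type*} (F : Finset ι)
    (q c lq uq lc uc : ι → ℝ)
    (hq : ∀ i ∈ F, lq i ≤ q i ∧ q i ≤ uq i)
    (hc : ∀ i ∈ F, lc i ≤ c i ∧ c i ≤ uc i)
    (i : ι) (hi : i ∈ F)
    (helim : ∃ j ∈ F, uq i < lq j ∧ uc j < lc i) :
    (∃ j ∈ F, q i < q j ∧ c j < c i) ∧
      i ∉ {k ∈ F | ¬ ∃ j ∈ F, (q k ≤ q j ∧ c j ≤ c k ∧ (q k < q j ∨ c j < c k))} := by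
  obtain ⟨j, hj, h1, h2⟩ := helim
  have hqi := hq i hi; have hqj := hq j hj
  have hci := hc i hi; have hcj := hc j hj
  have hlt : q i < q j := lt_of_le_of_lt hqi.2 (h1.trans_le hqj.1)
  have hlt2 : c j < c i := lt_of_le_of_lt hcj.2 (h2.trans_le hci.1)
  refine ⟨⟨j, hj, hlt, hlt2⟩, ?_⟩
  intro hmem
  exact (Finset.mem_filter.mp hmem).2 ⟨j, hj, hlt.le, hlt2.le, Or.inl hlt⟩
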